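/- Let T > 0, κ ≥ 0, M ≥ 0. Let K : [0,T] → ℝ be continuously differentiable with |K(t)| ≤ κ and |K'(t)| ≤ κ on [0,T], let g : [0,T] → ℝ be continuous with |g(t)| ≤ M on [0,T], and let φ : [0,T] → ℝ be three times continuously differentiable satisfying φ''' + 4·K·φ' + 2·K'·φ = −2·g on [0,T] with φ(0) = φ'(0) = φ''(0) = 0. Then there exists a constant C > 0, depending only on T and κ (and not on M, g, or φ), such that |φ(t)| ≤ C·t³·M for all t ∈ [0,T]. -/

import Mathlib

open Set

/-- Cubic bound on the solution, with triple zero initial data, of the third-order linear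
ODE `φ''' + 4Kφ' + 2K'φ = −2g`: there is a constant `C > 0` depending only on `T` and
`κ` such that `|φ(t)| ≤ C·t³·M` on `[0,T]`. -/
theorem phi_cubic_bound_of_third_order_ode
    (T κ : ℝ) (hT : 0 < T) (hκ : 0 ≤ κ) :
    ∃ C : ℝ, 0 < C ∧
      ∀ (M : ℝ), 0 ≤ M →
      ∀ (K g φ : ℝ → ℝ),
        ContDiff ℝ 1 K →
        (∀ t ∈ Icc (0 : ℝ) T, |K t| ≤ κ) →
        (∀ t ∈ Icc (0 : ℝ) T, |deriv K t| ≤ κ) →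
        ContinuousOn g (Icc 0 T) →
        (∀ t ∈ Icc (0 : ℝ) T, |g t| ≤ M) →
        ContDiff ℝ 3 φ →
        (∀ t ∈ Icc (0 : ℝ) T,
          deriv (deriv (deriv φ)) t + 4 * K t * deriv φ t + 2 * deriv K t * φ t
            = -2 * g t) →
        φ 0 = 0 → deriv φ 0 = 0 → deriv (deriv φ) 0 = 0 →
        ∀ t ∈ Icc (0 : ℝ) T, |φ t| ≤ C * t ^ 3 * M := by
  set k : ℝ := 1 + 6 * κ with hkdef
  have hk0 : (0:ℝ) < k := by positivity
  set B : ℝ := 2 * Real.exp (k * T) with hBdef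
  have hB0 : (0:ℝ) < B := by positivity
  refine ⟨B, hB0, ?_⟩
  intro M hM K g φ hK hKb hK'b hg hgb hφ hode h0 h1 h2
  -- smoothness facts
  have hφ1 : ContDiff ℝ 2 (deriv φ) :=
    ((contDiff_succ_iff_deriv (n := 2)).mp (by exact_mod_cast hφ)).2.2
  have hφ2 : ContDiff ℝ 1 (deriv (deriv φ)) :=
    ((contDiff_succ_iff_deriv (n := 1)).mp (by exact_mod_cast hφ1)).2.2
  have hdφ : Differentiable ℝ φ := hφ.differentiable (by norm_num)
  have hdφ1 : Differentiable ℝ (deriv φ) := hφ1.differentiable (by norm_num)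
  have hdφ2 : Differentiable ℝ (deriv (deriv φ)) := hφ2.differentiable (by norm_num)
  set f : ℝ → ℝ × ℝ × ℝ := fun t => (φ t, deriv φ t, deriv (deriv φ) t) with hfdef
  set f' : ℝ → ℝ × ℝ × ℝ :=
    fun t => (deriv φ t, deriv (deriv φ) t, deriv (deriv (deriv φ)) t) with hf'def
  have hfd : ∀ t, HasDerivAt f (f' t) t := fun t =>
    HasDerivAt.prodMk ((hdφ t).hasDerivAt) (HasDerivAt.prodMk ((hdφ1 t).hasDerivAt) ((hdφ2 t).hasDerivAt))
  have hfc : ContinuousOn f (Icc 0 T) :=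
    (hφ.continuous.prodMk (hφ1.continuous.prodMk hφ2.continuous)).continuousOn
  -- component bounds by the norm
  have hcomp : ∀ t, |φ t| ≤ ‖f t‖ ∧ |deriv φ t| ≤ ‖f t‖ ∧ |deriv (deriv φ) t| ≤ ‖f t‖ := by
    intro t
    have hnf : ‖f t‖ = max |φ t| (max |deriv φ t| |deriv (deriv φ) t|) := by
      simp [hfdef, Prod.norm_def, Real.norm_eq_abs]
    rw [hnf]
    exact ⟨le_max_left _ _, le_trans (le_max_left _ _) (le_max_right _ _),
      le_trans (le_max_right _ _) (le_max_right _ _)⟩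
  -- Grönwall
  have key : ∀ t ∈ Icc (0:ℝ) T, ‖f t‖ ≤ gronwallBound 0 k (2 * M) (t - 0) := by
    apply norm_le_gronwallBound_of_norm_deriv_right_le hfc
      (fun t _ => (hfd t).hasDerivWithinAt)
    · simp [hfdef, h0, h1, h2, Prod.norm_def]
    · intro t ht
      have ht' : t ∈ Icc (0:ℝ) T := Ico_subset_Icc_self ht
      have h3 : deriv (deriv (deriv φ)) t
          = -2 * g t - 4 * K t * deriv φ t - 2 * deriv K t * φ t := by
        linarith [hode t ht']
      have hgt := hgb t ht'
      have hKt := hKb t ht'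
      have hK't := hK'b t ht'
      obtain ⟨c1, c2, c3⟩ := hcomp t
      have hn : ‖f' t‖
          = max |deriv φ t| (max |deriv (deriv φ) t| |deriv (deriv (deriv φ)) t|) := by
        simp [hf'def, Prod.norm_def, Real.norm_eq_abs]
      rw [hn]
      have hfn : (0:ℝ) ≤ ‖f t‖ := norm_nonneg _
      have h3b : |deriv (deriv (deriv φ)) t| ≤ k * ‖f t‖ + 2 * M := by
        rw [h3]
        have t1 := abs_sub (-2 * g t - 4 * K t * deriv φ t) (2 * deriv K t * φ t)
        have t2 := abs_sub (-2 * g t) (4 * K t * deriv φ t)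
        have e4 : |(-2) * g t| = 2 * |g t| := by rw [abs_mul]; norm_num
        have e5 : |4 * K t * deriv φ t| = 4 * (|K t| * |deriv φ t|) := by
          rw [abs_mul, abs_mul]; norm_num; ring
        have e6 : |2 * deriv K t * φ t| = 2 * (|deriv K t| * |φ t|) := by
          rw [abs_mul, abs_mul]; norm_num; ring
        have e2 : |K t| * |deriv φ t| ≤ κ * ‖f t‖ :=
          mul_le_mul hKt c2 (abs_nonneg _) hκ
        have e3 : |deriv K t| * |φ t| ≤ κ * ‖f t‖ :=
          mul_le_mul hK't c1 (abs_nonneg _) hκ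
        have ek : k * ‖f t‖ = ‖f t‖ + 6 * (κ * ‖f t‖) := by rw [hkdef]; ring
        linarith
      have hle : ∀ x : ℝ, |x| ≤ ‖f t‖ → |x| ≤ k * ‖f t‖ + 2 * M := by
        intro x hx
        have : ‖f t‖ ≤ k * ‖f t‖ := by nlinarith
        linarith
      exact max_le (hle _ c2) (max_le (hle _ c3) h3b)
  -- evaluate the Grönwall bound
  have hgw : ∀ t ∈ Icc (0:ℝ) T, ‖f t‖ ≤ B * M * t := by
    intro t ht
    refine (key t ht).trans ?_
    rw [sub_zero, gronwallBound_of_K_ne_0 (ne_of_gt hk0)]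
    have ht0 : 0 ≤ t := ht.1
    have htT : t ≤ T := ht.2
    have hexp : Real.exp (k * t) - 1 ≤ k * t * Real.exp (k * t) := by
      have hh := Real.add_one_le_exp (-(k * t))
      have hprod : Real.exp (-(k * t)) * Real.exp (k * t) = 1 := by
        rw [← Real.exp_add]; simp
      nlinarith [Real.exp_pos (k * t)]
    have hmono : Real.exp (k * t) ≤ Real.exp (k * T) :=
      Real.exp_le_exp.mpr (by nlinarith)
    have hb2 : Real.exp (k * t) - 1 ≤ k * t * Real.exp (k * T) :=
      hexp.trans (mul_le_mul_of_nonneg_left hmono (by positivity))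
    have hstep : 2 * M / k * (Real.exp (k * t) - 1)
        ≤ 2 * M / k * (k * t * Real.exp (k * T)) :=
      mul_le_mul_of_nonneg_left hb2 (by positivity)
    calc (0:ℝ) * Real.exp (k * t) + 2 * M / k * (Real.exp (k * t) - 1)
        = 2 * M / k * (Real.exp (k * t) - 1) := by ring
      _ ≤ 2 * M / k * (k * t * Real.exp (k * T)) := hstep
      _ = B * M * t := by rw [hBdef]; field_simp
  have h2bound : ∀ t ∈ Icc (0:ℝ) T, |deriv (deriv φ) t| ≤ B * M * t :=
    fun t ht => le_trans (hcomp t).2.2 (hgw t ht)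
  -- integrate once: bound on φ'
  have h1bound : ∀ t ∈ Icc (0:ℝ) T, |deriv φ t| ≤ B * M / 2 * t ^ 2 := by
    intro t ht
    have ht0 : 0 ≤ t := ht.1
    have hftc : ∫ s in (0:ℝ)..t, deriv (deriv φ) s = deriv φ t - deriv φ 0 :=
      intervalIntegral.integral_deriv_eq_sub (fun s _ => hdφ1 s)
        (hφ2.continuous.intervalIntegrable _ _)
    have habs : |∫ s in (0:ℝ)..t, deriv (deriv φ) s| ≤ ∫ s in (0:ℝ)..t, B * M * s := by
      calc |∫ s in (0:ℝ)..t, deriv (deriv φ) s|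
          ≤ ∫ s in (0:ℝ)..t, |deriv (deriv φ) s| := by
            rw [← Real.norm_eq_abs]
            exact intervalIntegral.norm_integral_le_integral_norm ht0
        _ ≤ ∫ s in (0:ℝ)..t, B * M * s := by
            apply intervalIntegral.integral_mono_on ht0
            · exact hφ2.continuous.abs.intervalIntegrable _ _
            · exact (continuous_const.mul continuous_id).intervalIntegrable _ _
            · exact fun s hs => h2bound s ⟨hs.1, hs.2.trans ht.2⟩
    have hint : ∫ s in (0:ℝ)..t, B * M * s = B * M / 2 * t ^ 2 := by
      rw [intervalIntegral.integral_const_mul, integral_id]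
      ring
    rw [← sub_zero (deriv φ t), ← h1, ← hftc]
    rw [hint] at habs
    exact habs
  -- integrate twice: bound on φ
  intro t ht
  have ht0 : 0 ≤ t := ht.1
  have hftc : ∫ s in (0:ℝ)..t, deriv φ s = φ t - φ 0 :=
    intervalIntegral.integral_deriv_eq_sub (fun s _ => hdφ s)
      (hφ1.continuous.intervalIntegrable _ _)
  have habs : |∫ s in (0:ℝ)..t, deriv φ s| ≤ ∫ s in (0:ℝ)..t, B * M / 2 * s ^ 2 := by
    calc |∫ s in (0:ℝ)..t, deriv φ s|
        ≤ ∫ s in (0:ℝ)..t, |deriv φ s| := by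
          rw [← Real.norm_eq_abs]
          exact intervalIntegral.norm_integral_le_integral_norm ht0
      _ ≤ ∫ s in (0:ℝ)..t, B * M / 2 * s ^ 2 := by
          apply intervalIntegral.integral_mono_on ht0
          · exact hφ1.continuous.abs.intervalIntegrable _ _
          · exact (continuous_const.mul (continuous_pow 2)).intervalIntegrable _ _
          · exact fun s hs => h1bound s ⟨hs.1, hs.2.trans ht.2⟩
  have hint : ∫ s in (0:ℝ)..t, B * M / 2 * s ^ 2 = B * M / 6 * t ^ 3 := by
    rw [intervalIntegral.integral_const_mul, integral_pow]
    norm_num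
    ring
  rw [hint] at habs
  have hphit : |φ t| ≤ B * M / 6 * t ^ 3 := by
    rw [← sub_zero (φ t), ← h0, ← hftc]; exact habs
  have hforms : B * M / 6 * t ^ 3 ≤ B * t ^ 3 * M := by nlinarith [mul_nonneg (mul_nonneg hB0.le hM) (pow_nonneg ht0 3)]
  linarith
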